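/- Let r : (0,∞) → ℝ be measurable with r(s)/s integrable near 0 and r(s) = O(s^{−γ₀}) as s → ∞ for some γ₀ > 0. Define l₀(t) = (1/π) ∫_0^∞ e^{−st} r(s) ds for t > 0. Then l₀ is locally integrable on (0,∞), and for 0 ≤ a ≤ b, ∫_a^b l₀(t) dt = (1/π) ∫_0^∞ (e^{−sa} − e^{−sb}) r(s)/s ds. -/

import Mathlib

open MeasureTheory Set

lemma aux_exp_int (s a b : ℝ) (hs : 0 < s) (hab : a ≤ b) :
    ∫ t in Set.Ioc a b, Real.exp (-s * t)
      = (Real.exp (-s * a) - Real.exp (-s * b)) / s := by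
  rw [← intervalIntegral.integral_of_le hab]
  have hs' : s ≠ 0 := ne_of_gt hs
  have hderiv : ∀ t : ℝ, HasDerivAt (fun u => -Real.exp (-s * u) / s) (Real.exp (-s * t)) t := by
    intro t
    have h1 : HasDerivAt (fun u : ℝ => -s * u) (-s) t := by
      simpa using (hasDerivAt_id t).const_mul (-s)
    have h2 := (Real.hasDerivAt_exp (-s * t)).comp t h1
    have h3 : HasDerivAt (fun u => -Real.exp (-s * u) / s)
        (-(Real.exp (-s * t) * -s / s)) t := by
      have h4 := (h2.div_const s).fun_neg
      refine h4.congr_of_eventuallyEq (Filter.Eventually.of_forall fun u => ?_)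
      simp [Function.comp, neg_div]
    convert h3 using 1
    rw [mul_neg, neg_div, neg_neg, mul_div_assoc, div_self hs', mul_one]
  rw [intervalIntegral.integral_eq_sub_of_hasDerivAt (fun t _ => hderiv t)
    (((Real.continuous_exp.comp (continuous_const.mul continuous_id))).intervalIntegrable a b)]
  ring

lemma aux_tail (r : ℝ → ℝ) (γ₀ C M : ℝ) (hγ₀ : 0 < γ₀) (hM : 0 < M)
    (hmeas : Measurable r) (hbound : ∀ s ≥ M, |r s| ≤ C * s ^ (-γ₀)) :
    IntegrableOn (fun s => r s / s) (Set.Ioi M) volume := by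
  have hint : IntegrableOn (fun s : ℝ => C * s ^ (-γ₀ - 1)) (Set.Ioi M) volume :=
    (integrableOn_Ioi_rpow_of_lt (by linarith) hM).const_mul C
  refine hint.mono' ((hmeas.div measurable_id).aestronglyMeasurable) ?_
  rw [ae_restrict_iff' measurableSet_Ioi]
  refine Filter.Eventually.of_forall (fun s hs => ?_)
  have hs0 : 0 < s := lt_trans hM hs
  have h1 : ‖r s / s‖ = |r s| / s := by
    rw [Real.norm_eq_abs, abs_div, abs_of_pos hs0]
  have h3 : C * s ^ (-γ₀ - 1) = C * s ^ (-γ₀) / s := by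
    rw [Real.rpow_sub hs0, Real.rpow_one]; ring
  rw [h1, h3]
  gcongr
  exact hbound s hs.le

lemma aux_hP (r : ℝ → ℝ) (γ₀ C M : ℝ) (hγ₀ : 0 < γ₀) (hM1 : (1:ℝ) ≤ M)
    (hmeas : Measurable r)
    (h0 : IntegrableOn (fun s => r s / s) (Set.Ioc 0 1) volume)
    (hbound : ∀ s ≥ M, |r s| ≤ C * s ^ (-γ₀))
    (hr1 : IntegrableOn r (Set.Ioc 1 M) volume) :
    IntegrableOn (fun s => r s / s) (Set.Ioi 0) volume := by
  have hM0 : (0:ℝ) < M := lt_of_lt_of_le one_pos hM1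
  have e1 : Set.Ioc (0:ℝ) 1 ∪ Set.Ioc 1 M = Set.Ioc 0 M :=
    Set.Ioc_union_Ioc_eq_Ioc (by norm_num) hM1
  have e2 : Set.Ioc (0:ℝ) M ∪ Set.Ioi M = Set.Ioi 0 :=
    Set.Ioc_union_Ioi_eq_Ioi hM0.le
  rw [← e2, ← e1]
  refine IntegrableOn.union (IntegrableOn.union h0 ?_) ?_
  · refine hr1.abs.mono' ((hmeas.div measurable_id).aestronglyMeasurable) ?_
    rw [ae_restrict_iff' measurableSet_Ioc]
    refine Filter.Eventually.of_forall (fun s hs => ?_)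
    have hs0 : 0 < s := lt_trans one_pos hs.1
    rw [Real.norm_eq_abs, abs_div, abs_of_pos hs0]
    calc |r s| / s ≤ |r s| / 1 := by gcongr; exact hs.1.le
    _ = |r s| := div_one _
  · exact aux_tail r γ₀ C M hγ₀ hM0 hmeas hbound

set_option maxHeartbeats 2000000 in
theorem l0_locallyIntegrable (r : ℝ → ℝ) (γ₀ : ℝ) (hγ₀ : 0 < γ₀)
    (hmeas : Measurable r)
    (h0 : IntegrableOn (fun s => r s / s) (Set.Ioc 0 1) volume)
    (hinfty : ∃ C s₀ : ℝ, 0 < s₀ ∧ ∀ s ≥ s₀, |r s| ≤ C * s ^ (-γ₀)) :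
    LocallyIntegrableOn (fun t => (1 / Real.pi) * ∫ s in Set.Ioi (0:ℝ), Real.exp (-s * t) * r s)
      (Set.Ioi 0) volume ∧
    ∀ a b : ℝ, 0 ≤ a → a ≤ b →
      ∫ t in a..b, (1 / Real.pi) * ∫ s in Set.Ioi (0:ℝ), Real.exp (-s * t) * r s
        = (1 / Real.pi) * ∫ s in Set.Ioi (0:ℝ),
            (Real.exp (-s * a) - Real.exp (-s * b)) * r s / s := by
  obtain ⟨C, s₀, hs₀, hbound₀⟩ := hinfty
  set M : ℝ := max s₀ 1 with hMdef
  have hM1 : (1:ℝ) ≤ M := le_max_right _ _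
  have hM0 : (0:ℝ) < M := lt_of_lt_of_le one_pos hM1
  have hbound : ∀ s ≥ M, |r s| ≤ C * s ^ (-γ₀) :=
    fun s hs => hbound₀ s (le_trans (le_max_left _ _) hs)
  by_cases hP : IntegrableOn (fun s => r s / s) (Set.Ioi 0) volume
  · -- good case
    have key : ∀ a b : ℝ, 0 ≤ a → a ≤ b →
        Integrable (Function.uncurry fun t s => Real.exp (-s * t) * r s)
          ((volume.restrict (Set.Ioc a b)).prod (volume.restrict (Set.Ioi 0))) := by
      intro a b ha hab
      have hmeasf : AEStronglyMeasurable (Function.uncurry fun t s => Real.exp (-s * t) * r s)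
          ((volume.restrict (Set.Ioc a b)).prod (volume.restrict (Set.Ioi 0))) := by
        exact (((measurable_snd.neg.mul measurable_fst).exp).mul
          (hmeas.comp measurable_snd)).aestronglyMeasurable
      rw [integrable_prod_iff' hmeasf]
      simp only [Function.uncurry_apply_pair]
      constructor
      · refine Filter.Eventually.of_forall (fun s => ?_)
        exact ((Real.continuous_exp.comp (continuous_const.mul continuous_id)).mul
          continuous_const).integrableOn_Ioc
      · have hg : Integrable (fun s => |r s| * ((Real.exp (-s * a) - Real.exp (-s * b)) / s))
            (volume.restrict (Set.Ioi 0)) := by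
          refine hP.abs.mono' ?_ ?_
          · exact (hmeas.abs.mul ((((measurable_id.neg.mul_const a).exp).sub
              ((measurable_id.neg.mul_const b).exp)).div measurable_id)).aestronglyMeasurable
          · rw [ae_restrict_iff' measurableSet_Ioi]
            refine Filter.Eventually.of_forall (fun s hs => ?_)
            have hs0 : (0:ℝ) < s := hs
            have hE1 : Real.exp (-s * b) ≤ Real.exp (-s * a) :=
              Real.exp_le_exp.2 (by nlinarith)
            have hE2 : Real.exp (-s * a) ≤ 1 := by
              rw [← Real.exp_zero]; exact Real.exp_le_exp.2 (by nlinarith)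
            have hE0 : 0 ≤ (Real.exp (-s * a) - Real.exp (-s * b)) / s :=
              div_nonneg (by linarith) hs0.le
            rw [Real.norm_eq_abs, abs_mul, abs_abs, abs_of_nonneg hE0, abs_div,
              abs_of_pos hs0]
            calc |r s| * ((Real.exp (-s * a) - Real.exp (-s * b)) / s)
                ≤ |r s| * (1 / s) := by
                  gcongr
                  have := (Real.exp_pos (-s * b)).le
                  linarith
              _ = |r s| / s := by ring
        refine hg.congr ?_
        rw [Filter.eventuallyEq_iff_exists_mem]
        refine ⟨Set.Ioi 0, (ae_restrict_iff' measurableSet_Ioi).2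
          (Filter.Eventually.of_forall (fun s hs => hs)), fun s hs => ?_⟩
        have hs0 : (0:ℝ) < s := hs
        have h1 : ∀ t : ℝ, ‖Real.exp (-s * t) * r s‖ = Real.exp (-s * t) * |r s| := by
          intro t
          simp [abs_mul, abs_of_pos (Real.exp_pos _)]
        calc (fun s => |r s| * ((Real.exp (-s * a) - Real.exp (-s * b)) / s)) s
            = ((Real.exp (-s * a) - Real.exp (-s * b)) / s) * |r s| := by ring
          _ = (∫ t in Set.Ioc a b, Real.exp (-s * t)) * |r s| := by
              rw [aux_exp_int s a b hs0 hab]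
          _ = ∫ t in Set.Ioc a b, Real.exp (-s * t) * |r s| := by
              rw [← integral_mul_const]
          _ = ∫ t in Set.Ioc a b, ‖Real.exp (-s * t) * r s‖ := by
              exact (setIntegral_congr_fun measurableSet_Ioc (fun t _ => (h1 t).symm))
    constructor
    · intro x hx
      have hx0 : (0:ℝ) < x := hx
      have hmarg := (key 0 (x + 1) le_rfl (by linarith)).integral_prod_left
      simp only [Function.uncurry_apply_pair] at hmarg
      refine ⟨Set.Ioi 0 ∩ Set.Iio (x + 1),
        Filter.inter_mem self_mem_nhdsWithin
          (mem_nhdsWithin_of_mem_nhds (Iio_mem_nhds (lt_add_one x))), ?_⟩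
      have hIO : IntegrableOn
          (fun t => 1 / Real.pi * ∫ s in Set.Ioi (0:ℝ), Real.exp (-s * t) * r s)
          (Set.Ioc 0 (x + 1)) volume := hmarg.const_mul (1 / Real.pi)
      exact hIO.mono_set (fun t ht => ⟨ht.1, ht.2.le⟩)
    · intro a b ha hab
      rw [intervalIntegral.integral_const_mul]
      congr 1
      rw [intervalIntegral.integral_of_le hab]
      have swap := integral_integral_swap (key a b ha hab)
      rw [swap]
      refine setIntegral_congr_fun measurableSet_Ioi (fun s hs => ?_)
      have hs0 : (0:ℝ) < s := hs
      rw [integral_mul_const, aux_exp_int s a b hs0 hab]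
      ring
  · -- degenerate case
    have hnotr : ¬ IntegrableOn r (Set.Ioc 1 M) volume := by
      intro h
      exact hP (aux_hP r γ₀ C M hγ₀ hM1 hmeas h0 hbound h)
    have hIocsub : Set.Ioc (1:ℝ) M ⊆ Set.Ioi 0 := fun s hs => lt_trans one_pos hs.1
    have hinner : ∀ t : ℝ, 0 < t →
        ¬ Integrable (fun s => Real.exp (-s * t) * r s) (volume.restrict (Set.Ioi 0)) := by
      intro t ht hcont
      apply hnotr
      have h0' : IntegrableOn (fun s => Real.exp (-s * t) * r s) (Set.Ioi 0) volume := hcont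
      have h1 : IntegrableOn (fun s => Real.exp (-s * t) * r s) (Set.Ioc 1 M) volume :=
        h0'.mono_set hIocsub
      refine (h1.abs.const_mul (Real.exp (M * t))).mono' hmeas.aestronglyMeasurable ?_
      rw [ae_restrict_iff' measurableSet_Ioc]
      refine Filter.Eventually.of_forall (fun s hs => ?_)
      have h2 : (1:ℝ) ≤ Real.exp (M * t) * Real.exp (-s * t) := by
        rw [← Real.exp_add, ← Real.exp_zero]
        apply Real.exp_le_exp.2
        nlinarith [hs.2]
      rw [Real.norm_eq_abs]
      calc |r s| = 1 * |r s| := (one_mul _).symm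
        _ ≤ (Real.exp (M * t) * Real.exp (-s * t)) * |r s| := by
            apply mul_le_mul_of_nonneg_right h2 (abs_nonneg _)
        _ = Real.exp (M * t) * |Real.exp (-s * t) * r s| := by
            rw [abs_mul, abs_of_pos (Real.exp_pos _)]; ring
    have hzero : ∀ t ∈ Set.Ioi (0:ℝ),
        (fun t => (1 / Real.pi) * ∫ s in Set.Ioi (0:ℝ), Real.exp (-s * t) * r s) t = 0 := by
      intro t ht
      show 1 / Real.pi * ∫ s in Set.Ioi (0:ℝ), Real.exp (-s * t) * r s = 0
      rw [integral_undef (hinner t ht), mul_zero]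
    constructor
    · intro x hx
      exact ⟨Set.Ioi 0, self_mem_nhdsWithin,
        (integrableOn_congr_fun hzero measurableSet_Ioi).2 (integrableOn_zero)⟩
    · intro a b ha hab
      rcases eq_or_lt_of_le hab with rfl | hlt
      · simp
      · have hL : ∫ t in a..b,
            (1 / Real.pi) * ∫ s in Set.Ioi (0:ℝ), Real.exp (-s * t) * r s = 0 := by
          rw [intervalIntegral.integral_of_le hab,
            setIntegral_congr_fun measurableSet_Ioc
              (fun t ht => hzero t (lt_of_le_of_lt ha ht.1))]
          simp
        have hR : ¬ Integrable (fun s => (Real.exp (-s * a) - Real.exp (-s * b)) * r s / s)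
            (volume.restrict (Set.Ioi 0)) := by
          intro hcont
          apply hnotr
          have h0' : IntegrableOn
              (fun s => (Real.exp (-s * a) - Real.exp (-s * b)) * r s / s) (Set.Ioi 0)
              volume := hcont
          have h1 : IntegrableOn
              (fun s => (Real.exp (-s * a) - Real.exp (-s * b)) * r s / s) (Set.Ioc 1 M)
              volume := h0'.mono_set hIocsub
          set c : ℝ := Real.exp (-(M * a)) * (1 - Real.exp (-(b - a))) / M with hc
          have hc0 : 0 < c := by
            apply div_pos _ hM0
            apply mul_pos (Real.exp_pos _)
            have : Real.exp (-(b - a)) < 1 := by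
              rw [← Real.exp_zero]
              exact Real.exp_lt_exp.2 (by linarith)
            linarith
          refine (h1.abs.const_mul (1 / c)).mono' hmeas.aestronglyMeasurable ?_
          rw [ae_restrict_iff' measurableSet_Ioc]
          refine Filter.Eventually.of_forall (fun s hs => ?_)
          have hs1 : (1:ℝ) ≤ s := hs.1.le
          have hs0 : (0:ℝ) < s := lt_of_lt_of_le one_pos hs1
          have key2 : c * |r s| ≤ |(Real.exp (-s * a) - Real.exp (-s * b)) * r s / s| := by
            have he1 : Real.exp (-(b - a)) ≤ 1 := by
              rw [← Real.exp_zero]; exact Real.exp_le_exp.2 (by linarith)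
            have hf1 : Real.exp (-(M * a)) ≤ Real.exp (-s * a) :=
              Real.exp_le_exp.2 (by nlinarith [hs.2])
            have hf2 : Real.exp (-s * b) ≤ Real.exp (-s * a) * Real.exp (-(b - a)) := by
              rw [← Real.exp_add]
              exact Real.exp_le_exp.2 (by nlinarith)
            have hf3 : Real.exp (-(M * a)) * (1 - Real.exp (-(b - a)))
                ≤ Real.exp (-s * a) - Real.exp (-s * b) := by
              nlinarith [Real.exp_pos (-s * a), Real.exp_pos (-(M * a))]
            have hEnn : 0 ≤ Real.exp (-s * a) - Real.exp (-s * b) :=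
              le_trans (mul_nonneg (Real.exp_pos _).le (by linarith)) hf3
            have hcle : c ≤ (Real.exp (-s * a) - Real.exp (-s * b)) / s := by
              rw [hc]
              exact div_le_div₀ hEnn hf3 hs0 hs.2
            rw [abs_div, abs_mul, abs_of_nonneg hEnn, abs_of_pos hs0]
            calc c * |r s| ≤ ((Real.exp (-s * a) - Real.exp (-s * b)) / s) * |r s| :=
                  mul_le_mul_of_nonneg_right hcle (abs_nonneg _)
              _ = (Real.exp (-s * a) - Real.exp (-s * b)) * |r s| / s := by ring
          rw [Real.norm_eq_abs]
          calc |r s| = (1 / c) * (c * |r s|) := by field_simp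
            _ ≤ (1 / c) * |(Real.exp (-s * a) - Real.exp (-s * b)) * r s / s| := by
                apply mul_le_mul_of_nonneg_left key2 (by positivity)
        rw [hL, integral_undef hR, mul_zero]
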